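/- Let X₀, Y₀ ∈ ℝ^{m×n} with rank(X₀ − Y₀) = 1, and let S = {X : rank(X − X₀) ≤ 1 and rank(X − Y₀) ≤ 1}. Then S = P₁ ∪ P₂ where, writing X₀ − Y₀ = v₀w₀ᵀ, P₁ = {Y₀ + x w₀ᵀ : x ∈ ℝᵐ} and P₂ = {Y₀ + v₀ yᵀ : y ∈ ℝⁿ}; moreover any two elements of P₁ differ by a matrix of rank ≤ 1, and likewise for P₂. -/

import Mathlib

open Matrix

lemma myRankVecMulVecLe {m n : ℕ} (a : Fin m → ℝ) (b : Fin n → ℝ) :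
    (vecMulVec a b).rank ≤ 1 := by
  rw [rank_eq_finrank_span_cols]
  have hle : Submodule.span ℝ (Set.range (vecMulVec a b)ᵀ) ≤ Submodule.span ℝ {a} := by
    rw [Submodule.span_le]
    rintro _ ⟨j, rfl⟩
    exact Submodule.mem_span_singleton.2 ⟨b j, by ext i; simp [vecMulVec_apply, mul_comm]⟩
  refine le_trans (Submodule.finrank_mono hle) ?_
  by_cases ha : a = 0
  · rw [ha, Submodule.span_zero_singleton]
    simp
  · exact le_of_eq (finrank_span_singleton ha)

lemma myFactor {m n : ℕ} (A : Matrix (Fin m) (Fin n) ℝ) (h : A.rank ≤ 1) :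
    ∃ (a : Fin m → ℝ) (b : Fin n → ℝ), A = vecMulVec a b := by
  rw [rank_eq_finrank_span_cols] at h
  obtain ⟨a, ha⟩ := (Submodule.finrank_le_one_iff_isPrincipal _).1 h
  have hcol : ∀ j, ∃ c : ℝ, Aᵀ j = c • a := by
    intro j
    have : Aᵀ j ∈ Submodule.span ℝ (Set.range A.col) :=
      Submodule.subset_span ⟨j, rfl⟩
    rw [ha] at this
    obtain ⟨c, hc⟩ := Submodule.mem_span_singleton.1 this
    exact ⟨c, hc.symm⟩
  choose b hb using hcol
  refine ⟨a, b, ?_⟩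
  ext i j
  have := congrFun (hb j) i
  simp only [transpose_apply, Pi.smul_apply, smul_eq_mul] at this
  simp [vecMulVec_apply, this, mul_comm]

lemma myTwoLeRank {m n : ℕ} (A : Matrix (Fin m) (Fin n) ℝ) (j k : Fin n)
    (h : LinearIndependent ℝ ![Aᵀ j, Aᵀ k]) : 2 ≤ A.rank := by
  rw [rank_eq_finrank_span_cols]
  have hle : Submodule.span ℝ (Set.range ![Aᵀ j, Aᵀ k]) ≤
      Submodule.span ℝ (Set.range Aᵀ) := by
    apply Submodule.span_mono
    rintro _ ⟨i, rfl⟩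
    fin_cases i
    · exact ⟨j, rfl⟩
    · exact ⟨k, rfl⟩
  have := finrank_span_eq_card h
  simp only [Fintype.card_fin] at this
  calc 2 = Module.finrank ℝ (Submodule.span ℝ (Set.range ![Aᵀ j, Aᵀ k])) := this.symm
    _ ≤ _ := Submodule.finrank_mono hle

lemma myMinor {n : ℕ} (b w : Fin n → ℝ) (hw : w ≠ 0) (h : ¬ ∃ c : ℝ, b = c • w) :
    ∃ j k, b j * w k ≠ b k * w j := by
  by_contra hc
  push_neg at hc
  obtain ⟨k, hk⟩ := Function.ne_iff.1 hw
  have hk' : w k ≠ 0 := hk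
  refine h ⟨b k / w k, ?_⟩
  ext j
  have hbw := hc j k
  show b j = b k / w k * w j
  field_simp
  linear_combination hbw

theorem stmt8 (m n : ℕ) (X₀ Y₀ : Matrix (Fin m) (Fin n) ℝ)
    (v₀ : Fin m → ℝ) (w₀ : Fin n → ℝ) (hv₀ : v₀ ≠ 0) (hw₀ : w₀ ≠ 0)
    (hfac : X₀ - Y₀ = vecMulVec v₀ w₀) (hrank : (X₀ - Y₀).rank = 1) :
    ({X | (X - X₀).rank ≤ 1 ∧ (X - Y₀).rank ≤ 1} : Set (Matrix (Fin m) (Fin n) ℝ)) =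
        {X | ∃ x : Fin m → ℝ, X = Y₀ + vecMulVec x w₀} ∪
        {X | ∃ y : Fin n → ℝ, X = Y₀ + vecMulVec v₀ y} ∧
      (∀ A ∈ {X : Matrix (Fin m) (Fin n) ℝ | ∃ x : Fin m → ℝ, X = Y₀ + vecMulVec x w₀},
        ∀ B ∈ {X : Matrix (Fin m) (Fin n) ℝ | ∃ x : Fin m → ℝ, X = Y₀ + vecMulVec x w₀},
          (A - B).rank ≤ 1) ∧
      (∀ A ∈ {X : Matrix (Fin m) (Fin n) ℝ | ∃ y : Fin n → ℝ, X = Y₀ + vecMulVec v₀ y},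
        ∀ B ∈ {X : Matrix (Fin m) (Fin n) ℝ | ∃ y : Fin n → ℝ, X = Y₀ + vecMulVec v₀ y},
          (A - B).rank ≤ 1) := by
  refine ⟨?_, ?_, ?_⟩
  · ext X
    simp only [Set.mem_setOf_eq, Set.mem_union]
    constructor
    · rintro ⟨h1, h2⟩
      obtain ⟨a, b, hab⟩ := myFactor (X - Y₀) h2
      have hX : X = Y₀ + vecMulVec a b := by
        rw [← hab]; abel
      by_cases hbw : ∃ c : ℝ, b = c • w₀
      · obtain ⟨c, rfl⟩ := hbw
        refine Or.inl ⟨c • a, ?_⟩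
        rw [hX]
        congr 1
        ext i j
        simp [vecMulVec_apply]
        ring
      · by_cases hav : ∃ c : ℝ, a = c • v₀
        · obtain ⟨c, rfl⟩ := hav
          refine Or.inr ⟨c • b, ?_⟩
          rw [hX]
          congr 1
          ext i j
          simp [vecMulVec_apply]
          ring
        · exfalso
          obtain ⟨j, k, hjk⟩ := myMinor b w₀ hw₀ hbw
          obtain ⟨i, l, hil⟩ := myMinor a v₀ hv₀ hav
          set B := X - X₀ with hB
          have hBeq : ∀ i' j', B i' j' = a i' * b j' - v₀ i' * w₀ j' := by
            intro i' j'
            have : B = (X - Y₀) - (X₀ - Y₀) := by rw [hB]; abel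
            rw [this, hab, hfac]
            simp [vecMulVec_apply]
          have hli : LinearIndependent ℝ ![Bᵀ j, Bᵀ k] := by
            rw [LinearIndependent.pair_iff]
            intro s t hst
            have hs1 : s * (a i * b j - v₀ i * w₀ j) + t * (a i * b k - v₀ i * w₀ k) = 0 := by
              have := congrFun hst i
              simpa [transpose_apply, hBeq] using this
            have hs2 : s * (a l * b j - v₀ l * w₀ j) + t * (a l * b k - v₀ l * w₀ k) = 0 := by
              have := congrFun hst l
              simpa [transpose_apply, hBeq] using this
            have hil' : a i * v₀ l - a l * v₀ i ≠ 0 := sub_ne_zero.2 hil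
            have hjk' : b j * w₀ k - b k * w₀ j ≠ 0 := sub_ne_zero.2 hjk
            have hp : (s * b j + t * b k) * (a i * v₀ l - a l * v₀ i) = 0 := by
              linear_combination v₀ l * hs1 - v₀ i * hs2
            have hp0 : s * b j + t * b k = 0 :=
              (mul_eq_zero.1 hp).resolve_right hil'
            have hqvi : (s * w₀ j + t * w₀ k) * v₀ i = 0 := by
              linear_combination a i * hp0 - hs1
            have hqvl : (s * w₀ j + t * w₀ k) * v₀ l = 0 := by
              linear_combination a l * hp0 - hs2
            have hq0 : s * w₀ j + t * w₀ k = 0 := by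
              by_contra hq
              have hvi : v₀ i = 0 := by
                rcases mul_eq_zero.1 hqvi with h | h
                · exact absurd h hq
                · exact h
              have hvl : v₀ l = 0 := by
                rcases mul_eq_zero.1 hqvl with h | h
                · exact absurd h hq
                · exact h
              apply hil'
              rw [hvi, hvl]; ring
            have hs0 : s * (b j * w₀ k - b k * w₀ j) = 0 := by
              linear_combination w₀ k * hp0 - b k * hq0
            have hs : s = 0 := (mul_eq_zero.1 hs0).resolve_right hjk'
            have htbk : t * b k = 0 := by linear_combination hp0 - b j * (by rw [hs] : s = 0)
            have htwk : t * w₀ k = 0 := by linear_combination hq0 - w₀ j * (by rw [hs] : s = 0)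
            refine ⟨hs, ?_⟩
            by_contra ht
            have hbk : b k = 0 := (mul_eq_zero.1 htbk) |>.resolve_left ht
            have hwk : w₀ k = 0 := (mul_eq_zero.1 htwk) |>.resolve_left ht
            apply hjk'
            rw [hbk, hwk]; ring
          have := myTwoLeRank B j k hli
          omega
    · rintro (⟨x, rfl⟩ | ⟨y, rfl⟩)
      · constructor
        · have : Y₀ + vecMulVec x w₀ - X₀ = vecMulVec (x - v₀) w₀ := by
            have h := hfac
            ext i j
            have := congrFun (congrFun hfac i) j
            simp only [Matrix.sub_apply, Matrix.add_apply, vecMulVec_apply, Pi.sub_apply] at this ⊢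
            linear_combination -this
          rw [this]
          exact myRankVecMulVecLe _ _
        · have : Y₀ + vecMulVec x w₀ - Y₀ = vecMulVec x w₀ := by abel
          rw [this]
          exact myRankVecMulVecLe _ _
      · constructor
        · have : Y₀ + vecMulVec v₀ y - X₀ = vecMulVec v₀ (y - w₀) := by
            ext i j
            have := congrFun (congrFun hfac i) j
            simp only [Matrix.sub_apply, Matrix.add_apply, vecMulVec_apply, Pi.sub_apply] at this ⊢
            linear_combination -this
          rw [this]
          exact myRankVecMulVecLe _ _
        · have : Y₀ + vecMulVec v₀ y - Y₀ = vecMulVec v₀ y := by abel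
          rw [this]
          exact myRankVecMulVecLe _ _
  · rintro A ⟨x, rfl⟩ B ⟨x', rfl⟩
    have : (Y₀ + vecMulVec x w₀) - (Y₀ + vecMulVec x' w₀) = vecMulVec (x - x') w₀ := by
      ext i j
      simp [vecMulVec_apply, Pi.sub_apply]
      ring
    rw [this]
    exact myRankVecMulVecLe _ _
  · rintro A ⟨y, rfl⟩ B ⟨y', rfl⟩
    have : (Y₀ + vecMulVec v₀ y) - (Y₀ + vecMulVec v₀ y') = vecMulVec v₀ (y - y') := by
      ext i j
      simp [vecMulVec_apply, Pi.sub_apply]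
      ring
    rw [this]
    exact myRankVecMulVecLe _ _
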